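/- Fix ℓ > 0, let I = [−ℓ, ℓ], and let M > 0. Let α : ℝ → ℝ satisfy sup |α| ≤ M and be Lipschitz with constant at most M. Then there is a constant C > 0, depending only on M and ℓ, such that for all Lipschitz functions θ, V : ℝ → ℝ with ∫_I θ² + (θ′)² dμ ≤ 1, one has ∫_I (θ·(α∘V))² + ((θ·(α∘V))′)² dμ ≤ C² · (1 + ∫_I V² + (V′)² dμ), where primes denote almost-everywhere derivatives and μ is Lebesgue measure on I. -/

import Mathlib

open MeasureTheory Real Set Filter Topology intervalIntegral

lemma aux_deriv_le {f g : ℝ → ℝ} {d e c x : ℝ} (hc : 0 ≤ c)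
    (hf : HasDerivAt f d x) (hg : HasDerivAt g e x)
    (h : ∀ y, |f y - f x| ≤ c * |g y - g x|) : |d| ≤ c * |e| := by
  have hf' : Tendsto (fun y => |slope f x y|) (𝓝[≠] x) (𝓝 |d|) :=
    (hasDerivAt_iff_tendsto_slope.1 hf).abs
  have hg' : Tendsto (fun y => c * |slope g x y|) (𝓝[≠] x) (𝓝 (c * |e|)) :=
    (hasDerivAt_iff_tendsto_slope.1 hg).abs.const_mul c
  refine le_of_tendsto_of_tendsto' hf' hg' fun y => ?_
  rcases eq_or_ne y x with rfl | hyx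
  · simp [slope_def_field]
  · have hpos : 0 < |y - x| := by rw [abs_pos, sub_ne_zero]; exact hyx
    rw [slope_def_field, slope_def_field, abs_div, abs_div, ← mul_div_assoc]
    exact div_le_div_of_nonneg_right (h y) hpos.le

lemma aux_abs_deriv_le_lip {f : ℝ → ℝ} {K : NNReal} (hf : LipschitzWith K f) (x : ℝ) :
    |deriv f x| ≤ K := by
  by_cases h : DifferentiableAt ℝ f x
  · have h2 : ∀ y, |f y - f x| ≤ (K : ℝ) * |id y - id x| := by
      intro y
      simpa [Real.dist_eq] using hf.dist_le_mul y x
    simpa using aux_deriv_le K.coe_nonneg h.hasDerivAt (hasDerivAt_id x) h2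
  · simp [deriv_zero_of_not_differentiableAt h, K.coe_nonneg]

lemma aux_key {t : ℕ → ℝ} (htpos : ∀ n, 0 < t n) (ht0 : Tendsto t atTop (𝓝 0))
    (g : ℝ → ℝ) (x d : ℝ) (hg : HasDerivAt g d x) :
    Tendsto (fun n => (g (x + t n) - g x) / t n) atTop (𝓝 d) := by
  have h1 : Tendsto (fun n => x + t n) atTop (𝓝[≠] x) := by
    apply tendsto_nhdsWithin_of_tendsto_nhds_of_eventually_within
    · simpa using tendsto_const_nhds.add ht0
    · exact Eventually.of_forall fun n => by
        simp only [mem_compl_singleton_iff]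
        intro h
        exact absurd (by linarith [htpos n] : t n = 0) (htpos n).ne'
  have h2 := (hasDerivAt_iff_tendsto_slope.1 hg).comp h1
  convert h2 using 2 with n
  simp [slope_def_field]

lemma aux_ftc {f : ℝ → ℝ} {K : NNReal} (hf : LipschitzWith K f) (a b : ℝ) :
    f b - f a = ∫ x in a..b, deriv f x := by
  set t : ℕ → ℝ := fun n => 1 / (n + 1) with ht
  have htpos : ∀ n, 0 < t n := fun n => by positivity
  have ht0 : Tendsto t atTop (𝓝 0) := tendsto_one_div_add_atTop_nhds_zero_nat
  have hfc : Continuous f := hf.continuous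
  have hint : ∀ u v : ℝ, IntervalIntegrable f volume u v := fun u v =>
    hfc.intervalIntegrable u v
  set F : ℕ → ℝ → ℝ := fun n x => (f (x + t n) - f x) / t n with hF
  -- dominated convergence
  have h_dct : Tendsto (fun n => ∫ x in a..b, F n x) atTop (𝓝 (∫ x in a..b, deriv f x)) := by
    apply intervalIntegral.tendsto_integral_filter_of_dominated_convergence (fun _ => (K : ℝ))
    · exact Eventually.of_forall fun n =>
        (((hfc.comp (continuous_add_right (t n))).sub hfc).div_const _).aestronglyMeasurable
    · refine Eventually.of_forall fun n => Eventually.of_forall fun x _ => ?_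
      have h1 : |f (x + t n) - f x| ≤ K * t n := by
        simpa [Real.dist_eq, abs_of_pos (htpos n)] using hf.dist_le_mul (x + t n) x
      rw [norm_div, Real.norm_eq_abs, Real.norm_eq_abs, abs_of_pos (htpos n),
        div_le_iff₀ (htpos n)]
      simpa using h1
    · exact intervalIntegrable_const
    · filter_upwards [hf.ae_differentiableAt_real] with x hx _
      exact aux_key htpos ht0 f x _ hx.hasDerivAt
  -- compute the integrals of F n
  have calc1 : ∀ n, ∫ x in a..b, F n x
      = ((∫ x in b..(b + t n), f x) - ∫ x in a..(a + t n), f x) / t n := by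
    intro n
    have h1 : ∫ x in a..b, (f (x + t n) - f x)
        = (∫ x in a..b, f (x + t n)) - ∫ x in a..b, f x :=
      integral_sub ((hfc.comp (continuous_add_right (t n))).intervalIntegrable _ _) (hint a b)
    have h2 : ∫ x in a..b, f (x + t n) = ∫ x in (a + t n)..(b + t n), f x :=
      integral_comp_add_right f (t n)
    have A1 : (∫ x in a..(a + t n), f x) + ∫ x in (a + t n)..(b + t n), f x
        = ∫ x in a..(b + t n), f x := integral_add_adjacent_intervals (hint _ _) (hint _ _)
    have A2 : (∫ x in a..b, f x) + ∫ x in b..(b + t n), f x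
        = ∫ x in a..(b + t n), f x := integral_add_adjacent_intervals (hint _ _) (hint _ _)
    rw [hF]
    simp only [intervalIntegral.integral_div]
    rw [h1, h2]
    congr 1
    linarith
  -- limits of the endpoint averages
  have hend : ∀ c : ℝ, Tendsto (fun n => (∫ x in c..(c + t n), f x) / t n) atTop (𝓝 (f c)) := by
    intro c
    have hG : HasDerivAt (fun u => ∫ x in c..u, f x) (f c) c :=
      integral_hasDerivAt_right (hint c c)
        (hfc.stronglyMeasurableAtFilter _ _) hfc.continuousAt
    have := aux_key htpos ht0 _ c _ hG
    simpa using this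
  have h_lim : Tendsto (fun n => ∫ x in a..b, F n x) atTop (𝓝 (f b - f a)) := by
    have := (hend b).sub (hend a)
    refine Tendsto.congr (fun n => ?_) this
    rw [calc1 n, sub_div]
  exact (tendsto_nhds_unique h_lim h_dct)
lemma aux_int_deriv_sq {f : ℝ → ℝ} {K : NNReal} (hf : LipschitzWith K f) (a b : ℝ) :
    IntegrableOn (fun x => (deriv f x) ^ 2) (Icc a b) := by
  refine Integrable.mono' (g := fun _ => (K : ℝ) ^ 2)
    (integrableOn_const measure_Icc_lt_top.ne)
    ((measurable_deriv f).pow_const 2).aestronglyMeasurable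
    (Eventually.of_forall fun x => ?_)
  have h := aux_abs_deriv_le_lip hf x
  rw [Real.norm_eq_abs, abs_of_nonneg (sq_nonneg _), ← sq_abs]
  exact pow_le_pow_left₀ (abs_nonneg _) h 2

lemma aux_int_deriv_abs {f : ℝ → ℝ} {K : NNReal} (hf : LipschitzWith K f) (a b : ℝ) :
    IntegrableOn (fun x => |deriv f x|) (Icc a b) := by
  refine Integrable.mono' (g := fun _ => (K : ℝ))
    (integrableOn_const measure_Icc_lt_top.ne)
    (measurable_deriv f).abs.aestronglyMeasurable
    (Eventually.of_forall fun x => ?_)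
  simpa using aux_abs_deriv_le_lip hf x

/-- Sobolev-type sup bound on `Icc (-ℓ) ℓ`. -/
lemma aux_sup_bound {ℓ : ℝ} (hℓ : 0 < ℓ) {θ : ℝ → ℝ} {Kθ : NNReal} (hθ : LipschitzWith Kθ θ)
    (h1 : (∫ x in Icc (-ℓ) ℓ, ((θ x) ^ 2 + (deriv θ x) ^ 2)) ≤ 1) :
    ∀ x ∈ Icc (-ℓ) ℓ, (θ x) ^ 2 ≤ 1 / (2 * ℓ) + 1 := by
  set I : Set ℝ := Icc (-ℓ) ℓ with hI
  have hIne : (-ℓ : ℝ) ≤ ℓ := by linarith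
  have hIm : MeasurableSet I := measurableSet_Icc
  have hθc : Continuous θ := hθ.continuous
  have Iθ2 : IntegrableOn (fun x => (θ x) ^ 2) I := (hθc.pow 2).integrableOn_Icc
  have Id2 : IntegrableOn (fun x => (deriv θ x) ^ 2) I := aux_int_deriv_sq hθ _ _
  -- min point
  obtain ⟨y₀, hy₀I, hy₀min⟩ := isCompact_Icc.exists_isMinOn (nonempty_Icc.2 hIne)
    ((hθc.pow 2).continuousOn)
  have hy₀min' : ∀ x ∈ I, (θ y₀) ^ 2 ≤ (θ x) ^ 2 := fun x hx => hy₀min hx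
  -- integral bounds
  have hθ2le : (∫ x in I, (θ x) ^ 2) ≤ 1 := by
    refine le_trans ?_ h1
    exact setIntegral_mono_on Iθ2 (Iθ2.add Id2) hIm
      (fun x _ => le_add_of_nonneg_right (sq_nonneg _))
  have hconst : (θ y₀) ^ 2 * (2 * ℓ) ≤ ∫ x in I, (θ x) ^ 2 := by
    have h2 : (∫ _x in I, (θ y₀) ^ 2) ≤ ∫ x in I, (θ x) ^ 2 :=
      setIntegral_mono_on (integrableOn_const measure_Icc_lt_top.ne) Iθ2 hIm hy₀min'
    rwa [setIntegral_const, hI, measureReal_def, Real.volume_Icc, smul_eq_mul,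
      ENNReal.toReal_ofReal (by linarith), (by ring : ℓ - -ℓ = 2 * ℓ), mul_comm] at h2
  have hy₀ : (θ y₀) ^ 2 ≤ 1 / (2 * ℓ) := by
    rw [le_div_iff₀ (by linarith)]
    linarith
  -- projection onto I
  set p : ℝ → ℝ := fun x => max (min x ℓ) (-ℓ) with hp
  have hplip : LipschitzWith 1 p := (LipschitzWith.id.min_const ℓ).max_const (-ℓ)
  have hpI : ∀ x, p x ∈ I := fun x =>
    ⟨le_max_right _ _, max_le (min_le_right _ _) hIne⟩
  have hpeq : ∀ x ∈ I, p x = x := fun x hx => by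
    rw [hp]; simp only []
    rw [min_eq_left hx.2, max_eq_left hx.1]
  -- bound of |θ| on I
  obtain ⟨z, hzI, hzmax⟩ := isCompact_Icc.exists_isMaxOn (nonempty_Icc.2 hIne)
    ((continuous_abs.comp hθc).continuousOn)
  set B : ℝ := |θ z| with hB
  have hBnn : 0 ≤ B := abs_nonneg _
  have hψb : ∀ x, |θ (p x)| ≤ B := fun x => hzmax (hpI x)
  -- ψ² is Lipschitz
  set ψsq : ℝ → ℝ := fun x => (θ (p x)) ^ 2 with hψsq
  have hψlip : LipschitzWith (Kθ * 1) (fun x => θ (p x)) := hθ.comp hplip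
  set L : ℝ := (Kθ : ℝ) * (2 * B) with hL
  have hLnn : 0 ≤ L := by positivity
  have hψsqlip : LipschitzWith L.toNNReal ψsq := by
    apply LipschitzWith.of_dist_le_mul
    intro x y
    rw [Real.coe_toNNReal _ hLnn, Real.dist_eq, Real.dist_eq]
    have e1 : ψsq x - ψsq y = (θ (p x) + θ (p y)) * (θ (p x) - θ (p y)) := by
      rw [hψsq]; ring
    rw [e1, abs_mul]
    have e2 : |θ (p x) - θ (p y)| ≤ (Kθ : ℝ) * |x - y| := by
      have := hψlip.dist_le_mul x y
      rw [Real.dist_eq, Real.dist_eq] at this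
      simpa using this
    have e3 : |θ (p x) + θ (p y)| ≤ 2 * B :=
      (abs_add_le _ _).trans (by linarith [hψb x, hψb y])
    calc |θ (p x) + θ (p y)| * |θ (p x) - θ (p y)|
        ≤ (2 * B) * ((Kθ : ℝ) * |x - y|) := by
          apply mul_le_mul e3 e2 (abs_nonneg _) (by positivity)
      _ = L * |x - y| := by rw [hL]; ring
  -- a.e. bound for deriv ψsq on I
  have hae : ∀ᵐ u ∂volume, u ∈ I → |deriv ψsq u| ≤ (θ u) ^ 2 + (deriv θ u) ^ 2 := by
    have hbd : ∀ᵐ u ∂volume, u ∉ ({-ℓ, ℓ} : Set ℝ) := by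
      have : volume ({-ℓ, ℓ} : Set ℝ) = 0 :=
        measure_union_null Real.volume_singleton Real.volume_singleton
      exact (compl_mem_ae_iff.2 this)
    filter_upwards [hθ.ae_differentiableAt_real, hbd] with u hdiff hu huI
    have huIoo : u ∈ Ioo (-ℓ) ℓ := by
      rcases lt_or_eq_of_le huI.1 with h | h
      · rcases lt_or_eq_of_le huI.2 with h' | h'
        · exact ⟨h, h'⟩
        · exact absurd (by simp [h']) hu
      · exact absurd (by simp [← h]) hu
    have heq : ψsq =ᶠ[𝓝 u] fun y => (θ y) ^ 2 := by
      filter_upwards [isOpen_Ioo.mem_nhds huIoo] with y hy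
      rw [hψsq]; simp only []
      rw [hpeq y (Ioo_subset_Icc_self hy)]
    have hd1 : deriv ψsq u = deriv (fun y => (θ y) ^ 2) u := heq.deriv_eq
    have hd2 : deriv (fun y => (θ y) ^ 2) u = 2 * θ u * deriv θ u := by
      have := (hdiff.hasDerivAt.pow 2).deriv
      exact this.trans (by norm_num)
    rw [hd1, hd2]
    have := two_mul_le_add_sq |θ u| |deriv θ u|
    have habs : |2 * θ u * deriv θ u| = 2 * |θ u| * |deriv θ u| := by
      rw [abs_mul, abs_mul]; simp
    rw [habs]
    nlinarith [sq_abs (θ u), sq_abs (deriv θ u)]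
  -- conclude
  intro x hxI
  have hftc := aux_ftc hψsqlip y₀ x
  have hψy₀ : ψsq y₀ = (θ y₀) ^ 2 := by rw [hψsq]; simp only []; rw [hpeq y₀ hy₀I]
  have hψx : ψsq x = (θ x) ^ 2 := by rw [hψsq]; simp only []; rw [hpeq x hxI]
  rw [hψy₀, hψx] at hftc
  -- |∫ in y₀..x| ≤ ∫_I |deriv ψsq|
  have hId : IntegrableOn (fun u => |deriv ψsq u|) I := aux_int_deriv_abs hψsqlip _ _
  have hsub : uIoc y₀ x ⊆ I := (Ioc_subset_Icc_self).trans
    ((ordConnected_Icc.uIcc_subset hy₀I hxI))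
  have hb1 : |∫ u in y₀..x, deriv ψsq u| ≤ ∫ u in uIoc y₀ x, |deriv ψsq u| := by
    simpa [Real.norm_eq_abs] using
      intervalIntegral.norm_integral_le_integral_norm_uIoc (f := deriv ψsq) (a := y₀) (b := x)
  have hb2 : (∫ u in uIoc y₀ x, |deriv ψsq u|) ≤ ∫ u in I, |deriv ψsq u| := by
    apply setIntegral_mono_set hId
    · exact Eventually.of_forall fun u => abs_nonneg _
    · exact HasSubset.Subset.eventuallyLE hsub
  have hb3 : (∫ u in I, |deriv ψsq u|) ≤ ∫ u in I, ((θ u) ^ 2 + (deriv θ u) ^ 2) := by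
    apply setIntegral_mono_on_ae hId (Iθ2.add Id2) hIm
    filter_upwards [hae] with u hu huI
    exact hu huI
  have : (θ x) ^ 2 - (θ y₀) ^ 2 ≤ 1 := by
    calc (θ x) ^ 2 - (θ y₀) ^ 2 = ∫ u in y₀..x, deriv ψsq u := hftc
      _ ≤ |∫ u in y₀..x, deriv ψsq u| := le_abs_self _
      _ ≤ 1 := le_trans hb1 (le_trans hb2 (le_trans hb3 h1))
  linarith

/-- Key estimate inside Lemma 4.6: for `α` bounded by `M` and Lipschitz with
constant at most `M`, there is `C > 0` depending only on `M` and `ℓ` such that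
for all Lipschitz test functions `θ` with `∫_I θ² + (θ')² ≤ 1` and all Lipschitz
potentials `V`,
`∫_I (θ·(α∘V))² + ((θ·(α∘V))')² ≤ C² (1 + ∫_I V² + (V')²)`. -/
theorem product_with_rate_H1_bound (ℓ M : ℝ) (hℓ : 0 < ℓ) (hM : 0 < M) :
    ∃ C > (0 : ℝ), ∀ (α θ V : ℝ → ℝ) (Kθ KV : NNReal),
      (∀ x : ℝ, |α x| ≤ M) → LipschitzWith (Real.toNNReal M) α →
      LipschitzWith Kθ θ → LipschitzWith KV V →
      (∫ x in Set.Icc (-ℓ) ℓ, ((θ x) ^ 2 + (deriv θ x) ^ 2)) ≤ 1 →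
      (∫ x in Set.Icc (-ℓ) ℓ,
          ((θ x * α (V x)) ^ 2 + (deriv (fun y => θ y * α (V y)) x) ^ 2))
        ≤ C ^ 2 * (1 + ∫ x in Set.Icc (-ℓ) ℓ, ((V x) ^ 2 + (deriv V x) ^ 2)) := by
  set S2 : ℝ := 1 / (2 * ℓ) + 1 with hS2def
  have hS2pos : 0 < S2 := by positivity
  refine ⟨M * Real.sqrt (2 * (1 + S2)), by positivity, ?_⟩
  intro α θ V Kθ KV hαb hαl hθ hV hθ1
  set I : Set ℝ := Icc (-ℓ) ℓ with hIdef
  have hIm : MeasurableSet I := measurableSet_Icc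
  have hMcoe : ((Real.toNNReal M : NNReal) : ℝ) = M := Real.coe_toNNReal M hM.le
  have hsup : ∀ x ∈ I, (θ x) ^ 2 ≤ S2 := aux_sup_bound hℓ hθ hθ1
  set h : ℝ → ℝ := fun y => α (V y) with hhdef
  have hh : LipschitzWith (Real.toNNReal M * KV) h := hαl.comp hV
  set g : ℝ → ℝ := fun y => θ y * α (V y) with hgdef
  have hgc : Continuous g := hθ.continuous.mul (hαl.continuous.comp hV.continuous)
  -- the pointwise a.e. bound
  set RHSf : ℝ → ℝ := fun x =>
    2 * M ^ 2 * ((θ x) ^ 2 + (deriv θ x) ^ 2)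
      + (2 * S2 * M ^ 2) * ((V x) ^ 2 + (deriv V x) ^ 2) with hRHSf
  have hae : ∀ᵐ x ∂volume, x ∈ I →
      g x ^ 2 + (deriv g x) ^ 2 ≤ RHSf x := by
    filter_upwards [hθ.ae_differentiableAt_real, hV.ae_differentiableAt_real,
      hh.ae_differentiableAt_real] with x h1 h2 h3 hxI
    have hd1 : deriv g x = deriv θ x * h x + θ x * deriv h x :=
      (h1.hasDerivAt.mul h3.hasDerivAt).deriv
    have hd2 : |deriv h x| ≤ M * |deriv V x| := by
      refine aux_deriv_le hM.le h3.hasDerivAt h2.hasDerivAt fun y => ?_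
      have := hαl.dist_le_mul (V y) (V x)
      rw [Real.dist_eq, Real.dist_eq, hMcoe] at this
      exact this
    have hc2 : (h x) ^ 2 ≤ M ^ 2 := by
      rw [← sq_abs]
      exact pow_le_pow_left₀ (abs_nonneg _) (hαb (V x)) 2
    have hdh2 : (deriv h x) ^ 2 ≤ M ^ 2 * (deriv V x) ^ 2 := by
      have := pow_le_pow_left₀ (abs_nonneg _) hd2 2
      rw [sq_abs, mul_pow, sq_abs] at this
      exact this
    have ha2 : (θ x) ^ 2 ≤ S2 := hsup x hxI
    have h3' : (θ x) ^ 2 * (deriv h x) ^ 2 ≤ S2 * (M ^ 2 * (deriv V x) ^ 2) :=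
      mul_le_mul ha2 hdh2 (sq_nonneg _) hS2pos.le
    have h4 : (deriv θ x) ^ 2 * (h x) ^ 2 ≤ (deriv θ x) ^ 2 * M ^ 2 :=
      mul_le_mul_of_nonneg_left hc2 (sq_nonneg _)
    have h5 : (θ x) ^ 2 * (h x) ^ 2 ≤ S2 * M ^ 2 :=
      mul_le_mul ha2 hc2 (sq_nonneg _) hS2pos.le
    have h5' : (θ x) ^ 2 * (h x) ^ 2 ≤ (θ x) ^ 2 * M ^ 2 :=
      mul_le_mul_of_nonneg_left hc2 (sq_nonneg _)
    have h6 : (deriv θ x * h x + θ x * deriv h x) ^ 2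
        ≤ 2 * ((deriv θ x) ^ 2 * (h x) ^ 2) + 2 * ((θ x) ^ 2 * (deriv h x) ^ 2) := by
      nlinarith [sq_nonneg (deriv θ x * h x - θ x * deriv h x)]
    have hgx : g x = θ x * h x := rfl
    rw [hgx, hd1]
    show (θ x * h x) ^ 2 + (deriv θ x * h x + θ x * deriv h x) ^ 2
        ≤ 2 * M ^ 2 * ((θ x) ^ 2 + (deriv θ x) ^ 2)
          + 2 * S2 * M ^ 2 * ((V x) ^ 2 + (deriv V x) ^ 2)
    have h7 : (θ x * h x) ^ 2 = (θ x) ^ 2 * (h x) ^ 2 := mul_pow _ _ _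
    rw [h7]
    nlinarith [h6, h4, h3', h5', mul_nonneg (sq_nonneg M) (sq_nonneg (θ x)),
      mul_nonneg (mul_nonneg hS2pos.le (sq_nonneg M)) (sq_nonneg (V x))]
  -- integrability
  have Iθ2 : IntegrableOn (fun x => (θ x) ^ 2) I := (hθ.continuous.pow 2).integrableOn_Icc
  have Idθ2 : IntegrableOn (fun x => (deriv θ x) ^ 2) I := aux_int_deriv_sq hθ _ _
  have IV2 : IntegrableOn (fun x => (V x) ^ 2) I := (hV.continuous.pow 2).integrableOn_Icc
  have IdV2 : IntegrableOn (fun x => (deriv V x) ^ 2) I := aux_int_deriv_sq hV _ _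
  have IRHS : IntegrableOn RHSf I := by
    apply Integrable.add
    · exact ((Iθ2.add Idθ2).const_mul _)
    · exact ((IV2.add IdV2).const_mul _)
  have ILHS : IntegrableOn (fun x => g x ^ 2 + (deriv g x) ^ 2) I := by
    refine IRHS.mono' ?_ ?_
    · exact ((hgc.pow 2).aestronglyMeasurable.add
        ((measurable_deriv g).pow_const 2).aestronglyMeasurable).restrict
    · rw [ae_restrict_iff' hIm]
      filter_upwards [hae] with x hx hxI
      rw [Real.norm_eq_abs, abs_of_nonneg (by positivity)]
      exact hx hxI
  -- integral comparison
  have hcomp : (∫ x in I, (g x ^ 2 + (deriv g x) ^ 2)) ≤ ∫ x in I, RHSf x := by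
    refine integral_mono_ae ILHS IRHS ?_
    rw [EventuallyLE, ae_restrict_iff' hIm]
    filter_upwards [hae] with x hx hxI
    exact hx hxI
  have hsplit : (∫ x in I, RHSf x)
      = 2 * M ^ 2 * (∫ x in I, ((θ x) ^ 2 + (deriv θ x) ^ 2))
        + (2 * S2 * M ^ 2) * ∫ x in I, ((V x) ^ 2 + (deriv V x) ^ 2) := by
    have J1 : Integrable (fun x => 2 * M ^ 2 * ((θ x) ^ 2 + (deriv θ x) ^ 2))
        (volume.restrict I) := (Iθ2.add Idθ2).const_mul _
    have J2 : Integrable (fun x => (2 * S2 * M ^ 2) * ((V x) ^ 2 + (deriv V x) ^ 2))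
        (volume.restrict I) := (IV2.add IdV2).const_mul _
    rw [hRHSf]
    rw [integral_add J1 J2, MeasureTheory.integral_const_mul, MeasureTheory.integral_const_mul]
  set DV : ℝ := ∫ x in I, ((V x) ^ 2 + (deriv V x) ^ 2) with hDV
  have hDVnn : 0 ≤ DV := setIntegral_nonneg hIm (fun x _ => by positivity)
  have hCsq : (M * Real.sqrt (2 * (1 + S2))) ^ 2 = M ^ 2 * (2 * (1 + S2)) := by
    rw [mul_pow, Real.sq_sqrt (by positivity)]
  calc (∫ x in I, (g x ^ 2 + (deriv g x) ^ 2))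
      ≤ ∫ x in I, RHSf x := hcomp
    _ = 2 * M ^ 2 * (∫ x in I, ((θ x) ^ 2 + (deriv θ x) ^ 2)) + (2 * S2 * M ^ 2) * DV :=
        hsplit
    _ ≤ 2 * M ^ 2 * 1 + (2 * S2 * M ^ 2) * DV := by
        have : 0 < 2 * M ^ 2 := by positivity
        nlinarith [hθ1]
    _ ≤ (M * Real.sqrt (2 * (1 + S2))) ^ 2 * (1 + DV) := by
        rw [hCsq]
        nlinarith [hDVnn, hS2pos, sq_nonneg M, mul_nonneg (sq_nonneg M) hDVnn,
          mul_nonneg hS2pos.le (mul_nonneg (sq_nonneg M) hDVnn)]
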